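/- Let f, g : ℝ → ℝ be positive and continuous on [0,∞) such that f/g is decreasing on (0,∞). Then the function x ↦ (∫₀ˣ f(t) dt)/(∫₀ˣ g(t) dt) is decreasing on (0,∞). -/

import Mathlib

open Set intervalIntegral

theorem cheeger_gromov_taylor (f g : ℝ → ℝ)
    (hfc : ContinuousOn f (Ici 0)) (hgc : ContinuousOn g (Ici 0))
    (hfpos : ∀ x ∈ Ici (0 : ℝ), 0 < f x) (hgpos : ∀ x ∈ Ici (0 : ℝ), 0 < g x)
    (hanti : AntitoneOn (fun x => f x / g x) (Ioi 0)) :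
    AntitoneOn (fun x => (∫ t in (0 : ℝ)..x, f t) / (∫ t in (0 : ℝ)..x, g t)) (Ioi 0) := by
  -- integrability
  have hint : ∀ (h : ℝ → ℝ), ContinuousOn h (Ici 0) → ∀ a b : ℝ, 0 ≤ a → 0 ≤ b →
      IntervalIntegrable h MeasureTheory.volume a b := by
    intro h hc a b ha hb
    exact (hc.mono (by
      intro t ht
      rcases le_total a b with hab | hab
      · rw [uIcc_of_le hab] at ht; exact le_trans ha ht.1
      · rw [uIcc_of_ge hab] at ht; exact le_trans hb ht.1)).intervalIntegrable
  intro x hx y hy hxy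
  simp only [mem_Ioi] at hx hy
  have hfint : ∀ a b : ℝ, 0 ≤ a → 0 ≤ b → IntervalIntegrable f MeasureTheory.volume a b :=
    hint f hfc
  have hgint : ∀ a b : ℝ, 0 ≤ a → 0 ≤ b → IntervalIntegrable g MeasureTheory.volume a b :=
    hint g hgc
  set Fx := ∫ t in (0:ℝ)..x, f t with hFx
  set Gx := ∫ t in (0:ℝ)..x, g t with hGx
  set I := ∫ t in x..y, f t with hI
  set J := ∫ t in x..y, g t with hJ
  have hFy : (∫ t in (0:ℝ)..y, f t) = Fx + I :=
    (integral_add_adjacent_intervals (hfint 0 x le_rfl hx.le) (hfint x y hx.le (hx.trans_le hxy).le)).symm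
  have hGy : (∫ t in (0:ℝ)..y, g t) = Gx + J :=
    (integral_add_adjacent_intervals (hgint 0 x le_rfl hx.le) (hgint x y hx.le (hx.trans_le hxy).le)).symm
  have hGxpos : 0 < Gx :=
    intervalIntegral_pos_of_pos_on (hgint 0 x le_rfl hx.le)
      (fun t ht => hgpos t (le_of_lt ht.1)) hx
  have hFxpos : 0 < Fx :=
    intervalIntegral_pos_of_pos_on (hfint 0 x le_rfl hx.le)
      (fun t ht => hfpos t (le_of_lt ht.1)) hx
  have hJnn : 0 ≤ J := by
    apply intervalIntegral.integral_nonneg hxy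
    intro t ht
    exact (hgpos t (le_trans hx.le ht.1)).le
  have hGypos : 0 < Gx + J := by linarith
  have hgx : 0 < g x := hgpos x hx.le
  have hfx : 0 < f x := hfpos x hx.le
  -- Claim A: g x * I ≤ f x * J
  have hA : g x * I ≤ f x * J := by
    have : (∫ t in x..y, g x * f t) ≤ ∫ t in x..y, f x * g t := by
      apply intervalIntegral.integral_mono_on hxy
      · exact (hfint x y hx.le (hx.trans_le hxy).le).const_mul _
      · exact (hgint x y hx.le (hx.trans_le hxy).le).const_mul _
      · intro t ht
        have htpos : (0:ℝ) < t := lt_of_lt_of_le hx ht.1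
        have hgt : 0 < g t := hgpos t htpos.le
        have := hanti hx htpos ht.1
        simp only at this
        rw [div_le_div_iff₀ hgt hgx] at this
        linarith
    rwa [intervalIntegral.integral_const_mul, intervalIntegral.integral_const_mul] at this
  -- Claim B: f x * Gx ≤ g x * Fx
  have hB : f x * Gx ≤ g x * Fx := by
    have : (∫ t in (0:ℝ)..x, f x * g t) ≤ ∫ t in (0:ℝ)..x, g x * f t := by
      apply intervalIntegral.integral_mono_on hx.le
      · exact (hgint 0 x le_rfl hx.le).const_mul _
      · exact (hfint 0 x le_rfl hx.le).const_mul _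
      · intro s hs
        rcases eq_or_lt_of_le hs.1 with h0 | h0
        · -- s = 0 : limit argument
          subst h0
          have hev : ∀ᶠ s in nhdsWithin 0 (Ioi 0), f x * g s ≤ g x * f s := by
            filter_upwards [self_mem_nhdsWithin,
              Ioo_mem_nhdsGT_of_mem (by constructor <;> simp [hx] : (0:ℝ) ∈ Ico 0 x)]
              with s hs1 hs2
            have hsx : s ≤ x := hs2.2.le
            have hgs : 0 < g s := hgpos s (mem_Ici.mpr (le_of_lt hs1))
            have := hanti hs1 hx hsx
            simp only at this
            rw [div_le_div_iff₀ hgx hgs] at this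
            linarith
          have hcf : Filter.Tendsto f (nhdsWithin 0 (Ioi 0)) (nhds (f 0)) :=
            ((hfc 0 (self_mem_Ici)).mono Ioi_subset_Ici_self).tendsto
          have hcg : Filter.Tendsto g (nhdsWithin 0 (Ioi 0)) (nhds (g 0)) :=
            ((hgc 0 (self_mem_Ici)).mono Ioi_subset_Ici_self).tendsto
          have ht1 : Filter.Tendsto (fun s => f x * g s) (nhdsWithin 0 (Ioi 0))
              (nhds (f x * g 0)) := (hcg.const_mul _)
          have ht2 : Filter.Tendsto (fun s => g x * f s) (nhdsWithin 0 (Ioi 0))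
              (nhds (g x * f 0)) := (hcf.const_mul _)
          exact le_of_tendsto_of_tendsto ht1 ht2 hev
        · have hgs : 0 < g s := hgpos s hs.1
          have := hanti h0 hx hs.2
          simp only at this
          rw [div_le_div_iff₀ hgx hgs] at this
          linarith
    rwa [intervalIntegral.integral_const_mul, intervalIntegral.integral_const_mul] at this
  -- conclude
  simp only [hFy, hGy]
  rw [div_le_div_iff₀ hGypos hGxpos]
  nlinarith [mul_le_mul_of_nonneg_right hA hGxpos.le, mul_le_mul_of_nonneg_right hB hJnn, hgx]
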